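/- arXiv:0811.2522 — 2 statements merged into one kernel-verified Lean document; each statement's English description precedes it below -/
import Mathlib

section
/- Let N be a lattice of rank d, σ ⊂ N_ℝ a full-dimensional strongly convex rational polyhedral cone with primitive ray generators {e_α}, and ψ ∈ N*_ℚ a rational linear functional with ⟨ψ, e_α⟩ > 0 for all α. Suppose the subgroup ⟨ψ, N⟩ ⊆ ℚ equals (1/n)ℤ. Choose e ∈ N with ⟨ψ, e⟩ = 1/n and set Λ = N ∩ ker ψ. Then N = Λ ⊕ ℤe, and min{⟨ψ, v⟩ : v ∈ N ∩ int(σ)} = (1/n)·min{i ≥ 1 : Λ ∩ int(i·□) ≠ ∅}, where □ = Λ_ℝ ∩ (σ − e). -/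
open Set MeasureTheory Pointwise

-- helper B: intrinsic interior via affine span set equality
lemma aux_mem_intrinsicInterior {E : Type*} [NormedAddCommGroup E] [NormedSpace ℝ E]
    {s H : Set E} (hspan : (affineSpan ℝ s : Set E) = H) {x : E} :
    x ∈ intrinsicInterior ℝ s ↔ x ∈ H ∧ ∃ ε > 0, ∀ y ∈ H, dist y x < ε → y ∈ s := by
  constructor
  · rintro ⟨y, hy, rfl⟩
    have hxH : (y : E) ∈ H := by rw [← hspan]; exact y.2
    refine ⟨hxH, ?_⟩
    rw [mem_interior_iff_mem_nhds, Metric.mem_nhds_iff] at hy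
    obtain ⟨ε, hε, hball⟩ := hy
    refine ⟨ε, hε, fun z hz hdist => ?_⟩
    have hzspan : z ∈ affineSpan ℝ s := by
      rw [← AffineSubspace.mem_coe, hspan]; exact hz
    have : (⟨z, hzspan⟩ : affineSpan ℝ s) ∈ Metric.ball y ε := by
      simpa [Metric.mem_ball, Subtype.dist_eq] using hdist
    exact hball this
  · rintro ⟨hxH, ε, hε, h⟩
    have hxspan : x ∈ affineSpan ℝ s := by
      rw [← AffineSubspace.mem_coe, hspan]; exact hxH
    refine ⟨⟨x, hxspan⟩, ?_, rfl⟩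
    rw [mem_interior_iff_mem_nhds, Metric.mem_nhds_iff]
    refine ⟨ε, hε, fun z hz => ?_⟩
    exact h z (by rw [← hspan]; exact z.2) (by simpa [Metric.mem_ball, Subtype.dist_eq] using hz)
lemma aux_affineSpan {E : Type*} [NormedAddCommGroup E] [NormedSpace ℝ E]
    (ψ : E →ₗ[ℝ] ℝ) (σ : Set E)
    (hscale : ∀ t : ℝ, 0 < t → ∀ x ∈ σ, t • x ∈ σ)
    (z : E) (ε : ℝ) (hε : 0 < ε) (hball : Metric.ball z ε ⊆ σ) (hψz : 0 < ψ z)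
    (w₀ : E) (hw₀ : 0 < ψ w₀) :
    (affineSpan ℝ {x | ψ x = 0 ∧ x + w₀ ∈ σ} : Set E) = {x | ψ x = 0} := by
  set s : Set E := {x | ψ x = 0 ∧ x + w₀ ∈ σ} with hs
  set c : ℝ := ψ w₀ / ψ z with hc
  have hcpos : 0 < c := div_pos hw₀ hψz
  have hcz : c * ψ z = ψ w₀ := div_mul_cancel₀ _ (ne_of_gt hψz)
  have hzσ : z ∈ σ := hball (Metric.mem_ball_self hε)
  set p : E := c • z - w₀ with hp
  have hps : p ∈ s := by
    constructor
    · simp [hp, map_sub, _root_.map_smul, hcz]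
    · have : p + w₀ = c • z := by rw [hp]; abel
      rw [this]
      exact hscale c hcpos z hzσ
  -- every u in the hyperplane lies in the direction
  have hdir : ∀ u : E, ψ u = 0 → u ∈ (affineSpan ℝ s).direction := by
    intro u hu
    rcases eq_or_ne u 0 with rfl | hu0
    · exact Submodule.zero_mem _
    · have hnu : 0 < ‖u‖ := norm_pos_iff.mpr hu0
      set δ : ℝ := c * (ε / (2 * ‖u‖)) with hδ
      have hδpos : 0 < δ := by positivity
      have hq : p + δ • u ∈ s := by
        constructor
        · simp [hp, map_add, map_sub, _root_.map_smul, hcz, hu]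
        · have h1 : p + δ • u + w₀ = c • (z + (δ / c) • u) := by
            rw [hp, smul_add, smul_smul, mul_div_cancel₀ _ (ne_of_gt hcpos)]
            abel
          rw [h1]
          refine hscale c hcpos _ (hball ?_)
          have : dist (z + (δ / c) • u) z = ‖(δ / c) • u‖ := by
            simp [dist_eq_norm]
          rw [Metric.mem_ball, this, norm_smul, Real.norm_eq_abs,
            abs_of_pos (div_pos hδpos hcpos)]
          rw [hδ]
          have hc0 : c ≠ 0 := ne_of_gt hcpos
          have hn0 : ‖u‖ ≠ 0 := ne_of_gt hnu
          have heq : c * (ε / (2 * ‖u‖)) / c * ‖u‖ = ε / 2 := by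
            field_simp
          rw [heq]
          linarith
      have hdu : δ • u ∈ (affineSpan ℝ s).direction := by
        have := AffineSubspace.vsub_mem_direction
          (mem_affineSpan ℝ hq) (mem_affineSpan ℝ hps)
        simpa [vsub_eq_sub] using this
      have := Submodule.smul_mem (affineSpan ℝ s).direction δ⁻¹ hdu
      rwa [smul_smul, inv_mul_cancel₀ (ne_of_gt hδpos), one_smul] at this
  apply subset_antisymm
  · have hle : affineSpan ℝ s ≤ AffineSubspace.mk' (0 : E) (LinearMap.ker ψ) := by
      rw [affineSpan_le]
      intro x hx
      rw [AffineSubspace.mem_coe, AffineSubspace.mem_mk']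
      simpa [vsub_eq_sub, LinearMap.mem_ker] using hx.1
    intro x hx
    have := hle hx
    rw [AffineSubspace.mem_mk'] at this
    simpa [vsub_eq_sub, LinearMap.mem_ker] using this
  · intro w hw
    simp only [mem_setOf_eq] at hw
    have hwp : ψ (w - p) = 0 := by
      have : ψ p = 0 := hps.1
      simp [map_sub, this, hw]
    have := AffineSubspace.vadd_mem_of_mem_direction (hdir _ hwp) (mem_affineSpan ℝ hps)
    simpa [vadd_eq_add, sub_add_cancel] using this
lemma aux_key {E : Type*} [NormedAddCommGroup E] [NormedSpace ℝ E] [FiniteDimensional ℝ E]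
    (ψ : E →ₗ[ℝ] ℝ) (σ : Set E)
    (hscale : ∀ t : ℝ, 0 < t → ∀ x ∈ σ, t • x ∈ σ)
    (w₀ : E) (hw₀ : 0 < ψ w₀)
    (hspan : (affineSpan ℝ {x | ψ x = 0 ∧ x + w₀ ∈ σ} : Set E) = {x | ψ x = 0})
    (x : E) (hx : ψ x = 0) :
    x ∈ intrinsicInterior ℝ {x | ψ x = 0 ∧ x + w₀ ∈ σ} ↔ x + w₀ ∈ interior σ := by
  rw [aux_mem_intrinsicInterior hspan]
  have hψxw : ψ (x + w₀) = ψ w₀ := by simp [map_add, hx]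
  constructor
  · rintro ⟨-, ε, hε, h⟩
    rw [mem_interior_iff_mem_nhds]
    have hψc : Continuous ψ := ψ.continuous_of_finiteDimensional
    have hψne : ψ (x + w₀) ≠ 0 := by rw [hψxw]; exact ne_of_gt hw₀
    have hcont : ContinuousAt (fun u => (ψ w₀ / ψ u) • u) (x + w₀) :=
      (continuousAt_const.div hψc.continuousAt hψne).smul continuousAt_id
    have hfx : (ψ w₀ / ψ (x + w₀)) • (x + w₀) = x + w₀ := by
      rw [hψxw, div_self (ne_of_gt hw₀), one_smul]
    have h1 : (fun u => (ψ w₀ / ψ u) • u) ⁻¹' Metric.ball (x + w₀) ε ∈ nhds (x + w₀) := by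
      apply hcont.preimage_mem_nhds
      rw [hfx]
      exact Metric.ball_mem_nhds _ hε
    have h2 : {u | 0 < ψ u} ∈ nhds (x + w₀) := by
      have : IsOpen {u : E | 0 < ψ u} := isOpen_lt continuous_const hψc
      exact this.mem_nhds (by rw [mem_setOf_eq, hψxw]; exact hw₀)
    refine Filter.mem_of_superset (Filter.inter_mem h1 h2) ?_
    rintro u ⟨hu1, hu2⟩
    simp only [mem_setOf_eq] at hu2
    set t : ℝ := ψ w₀ / ψ u with ht
    have htpos : 0 < t := div_pos hw₀ hu2
    have hyH : ψ (t • u - w₀) = 0 := by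
      simp only [map_sub, _root_.map_smul, smul_eq_mul, ht,
        div_mul_cancel₀ _ (ne_of_gt hu2), sub_self]
    have hydist : dist (t • u - w₀) x < ε := by
      have : t • u - w₀ - x = t • u - (x + w₀) := by abel
      rw [dist_eq_norm, this, ← dist_eq_norm]
      exact hu1
    have hys := h _ hyH hydist
    have : t • u ∈ σ := by
      have := hys.2
      rwa [sub_add_cancel] at this
    have := hscale t⁻¹ (inv_pos.mpr htpos) _ this
    rwa [smul_smul, inv_mul_cancel₀ (ne_of_gt htpos), one_smul] at this
  · intro hint
    rw [mem_interior_iff_mem_nhds, Metric.mem_nhds_iff] at hint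
    obtain ⟨ε, hε, hball⟩ := hint
    refine ⟨hx, ε, hε, fun y hy hdist => ?_⟩
    refine ⟨hy, hball ?_⟩
    rw [Metric.mem_ball, dist_add_right]
    exact hdist
lemma aux_lattice {d : ℕ} (b : Module.Basis (Fin d) ℝ (Fin d → ℝ)) (σ : Set (Fin d → ℝ))
    (hscale : ∀ t : ℝ, 0 < t → ∀ x ∈ σ, t • x ∈ σ)
    (hfull : (interior σ).Nonempty) :
    ∃ v, v ∈ (Submodule.span ℤ (Set.range b) : Submodule ℤ (Fin d → ℝ)) ∧ v ∈ interior σ := by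
  obtain ⟨z, hz⟩ := hfull
  obtain ⟨ε, hε, hball⟩ := Metric.isOpen_iff.mp isOpen_interior z hz
  set C : ℝ := ∑ i, ‖b i‖ with hC
  have hC0 : 0 ≤ C := Finset.sum_nonneg fun i _ => norm_nonneg _
  set t : ℝ := (C + 1) / ε with htdef
  have ht : 0 < t := by positivity
  set r : Fin d → ℝ := fun i => b.repr (t • z) i with hr
  set y : Fin d → ℝ := ∑ i, (⌊r i⌋ : ℝ) • b i with hy
  have hyN : y ∈ (Submodule.span ℤ (Set.range b) : Submodule ℤ (Fin d → ℝ)) := by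
    refine Submodule.sum_mem _ fun i _ => ?_
    rw [show ((⌊r i⌋ : ℝ) • b i = (⌊r i⌋ : ℤ) • b i) from Int.cast_smul_eq_zsmul ℝ _ _]
    exact Submodule.smul_mem _ _ (Submodule.subset_span (Set.mem_range_self i))
  have hdiff : ‖t • z - y‖ ≤ C := by
    have hz' : t • z = ∑ i, r i • b i := by
      rw [hr]; exact (b.sum_repr _).symm
    rw [hz', hy, ← Finset.sum_sub_distrib]
    refine le_trans (norm_sum_le _ _) ?_
    rw [hC]
    refine Finset.sum_le_sum fun i _ => ?_
    rw [← sub_smul, norm_smul, Real.norm_eq_abs]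
    have h1 : |r i - (⌊r i⌋ : ℝ)| ≤ 1 := by
      rw [abs_of_nonneg (by linarith [Int.floor_le (r i)])]
      linarith [Int.lt_floor_add_one (r i)]
    calc |r i - (⌊r i⌋ : ℝ)| * ‖b i‖ ≤ 1 * ‖b i‖ :=
        mul_le_mul_of_nonneg_right h1 (norm_nonneg _)
      _ = ‖b i‖ := one_mul _
  have htε : C < t * ε := by
    rw [htdef, div_mul_cancel₀ _ (ne_of_gt hε)]
    linarith
  have hsub : Metric.ball (t • z) (t * ε) ⊆ σ := by
    intro u hu
    have h1 : t⁻¹ • u ∈ Metric.ball z ε := by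
      rw [Metric.mem_ball] at hu ⊢
      have : t⁻¹ • u - z = t⁻¹ • (u - t • z) := by
        rw [smul_sub, smul_smul, inv_mul_cancel₀ (ne_of_gt ht), one_smul]
      rw [dist_eq_norm, this, norm_smul, Real.norm_eq_abs, abs_of_pos (inv_pos.mpr ht)]
      rw [← dist_eq_norm] at *
      calc t⁻¹ * dist u (t • z) < t⁻¹ * (t * ε) :=
          mul_lt_mul_of_pos_left hu (inv_pos.mpr ht)
        _ = ε := by field_simp
    have h2 : t⁻¹ • u ∈ σ := interior_subset (hball h1)
    have := hscale t ht _ h2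
    rwa [smul_smul, mul_inv_cancel₀ (ne_of_gt ht), one_smul] at this
  have hyint : y ∈ interior σ := by
    apply interior_maximal hsub Metric.isOpen_ball
    rw [Metric.mem_ball, dist_eq_norm, ← norm_neg, neg_sub]
    exact lt_of_le_of_lt hdiff htε
  exact ⟨y, hyN, hyint⟩

/-- Let `N = span ℤ (range b)` be a full lattice of rank `d` in `ℝ^d`,
`σ` a full-dimensional strongly convex rational polyhedral cone with primitive ray
generators `e α ∈ N`, and `ψ` a linear functional positive on the `e α`, with
`⟨ψ, N⟩ = (1/n)ℤ`. Choose `e₀ ∈ N` with `ψ e₀ = 1/n` and let `Λ = N ∩ ker ψ`.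
Then `N = Λ ⊕ ℤ e₀` and
`min {ψ v : v ∈ N ∩ int σ} = (1/n) · min {i ≥ 1 : Λ ∩ relint(i·Q) ≠ ∅}`,
where `Q = ker ψ ∩ (σ - e₀)`. -/
theorem toric_mld_via_slice
    (d : ℕ) (hd : 0 < d)
    (b : Module.Basis (Fin d) ℝ (Fin d → ℝ))
    (N : Set (Fin d → ℝ))
    (hN : N = (Submodule.span ℤ (Set.range b) : Submodule ℤ (Fin d → ℝ)))
    (k : ℕ) (e : Fin k → (Fin d → ℝ))
    (he : ∀ α, e α ∈ N)
    (heprim : ∀ α, ∀ m : ℕ, 2 ≤ m → ¬ ∃ y ∈ N, e α = (m : ℝ) • y)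
    (σ : Set (Fin d → ℝ))
    (hσ : σ = {x | ∃ c : Fin k → ℝ, (∀ i, 0 ≤ c i) ∧ x = ∑ i, c i • e i})
    (hfull : (interior σ).Nonempty)
    (hstrong : σ ∩ (-σ) = {0})
    (ψ : (Fin d → ℝ) →ₗ[ℝ] ℝ)
    (hψpos : ∀ α, 0 < ψ (e α))
    (n : ℕ) (hn : 0 < n)
    (himg : {r : ℝ | ∃ x ∈ N, ψ x = r} = {r : ℝ | ∃ m : ℤ, r = (m : ℝ) / n})
    (e₀ : Fin d → ℝ) (he₀ : e₀ ∈ N) (hψe₀ : ψ e₀ = 1 / n)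
    (Λ : Set (Fin d → ℝ)) (hΛ : Λ = {x | x ∈ N ∧ ψ x = 0})
    (Q : Set (Fin d → ℝ)) (hQ : Q = {x | ψ x = 0 ∧ x + e₀ ∈ σ}) :
    (∀ v ∈ N, ∃! pr : (Fin d → ℝ) × ℤ, pr.1 ∈ Λ ∧ v = pr.1 + (pr.2 : ℝ) • e₀) ∧
    sInf {r : ℝ | ∃ v, v ∈ N ∧ v ∈ interior σ ∧ r = ψ v}
      = (1 / n) *
        (sInf {i : ℕ | 1 ≤ i ∧ ∃ x ∈ Λ, x ∈ intrinsicInterior ℝ ((i : ℝ) • Q)} : ℕ) := by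
  have hn' : (0 : ℝ) < n := by exact_mod_cast hn
  -- N as a submodule
  have hNmem : ∀ x, x ∈ N ↔ x ∈ (Submodule.span ℤ (Set.range b) : Submodule ℤ (Fin d → ℝ)) := by
    intro x; rw [hN]; exact Iff.rfl
  have hNsub : ∀ x ∈ N, ∀ y ∈ N, x - y ∈ N := fun x hx y hy =>
    (hNmem _).2 (Submodule.sub_mem _ ((hNmem _).1 hx) ((hNmem _).1 hy))
  have hNadd : ∀ x ∈ N, ∀ y ∈ N, x + y ∈ N := fun x hx y hy =>
    (hNmem _).2 (Submodule.add_mem _ ((hNmem _).1 hx) ((hNmem _).1 hy))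
  have hNzsmul : ∀ (m : ℤ), ∀ x ∈ N, (m : ℝ) • x ∈ N := fun m x hx =>
    (hNmem _).2 (by
      rw [Int.cast_smul_eq_zsmul]
      exact Submodule.smul_mem _ _ ((hNmem _).1 hx))
  -- scaling invariance of σ
  have hscale : ∀ t : ℝ, 0 < t → ∀ x ∈ σ, t • x ∈ σ := by
    rintro t ht x hx
    rw [hσ] at hx ⊢
    obtain ⟨c, hc, rfl⟩ := hx
    refine ⟨fun i => t * c i, fun i => mul_nonneg ht.le (hc i), ?_⟩
    rw [Finset.smul_sum]
    exact Finset.sum_congr rfl fun i _ => by rw [smul_smul]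
  -- ψ is positive on σ \ {0}
  have hψσpos : ∀ x ∈ σ, x ≠ 0 → 0 < ψ x := by
    intro x hx hx0
    rw [hσ] at hx
    obtain ⟨c, hc, rfl⟩ := hx
    have hsum : ψ (∑ i, c i • e i) = ∑ i, c i * ψ (e i) := by
      rw [map_sum]; exact Finset.sum_congr rfl fun i _ => _root_.map_smul ψ _ _
    rw [hsum]
    rcases (Finset.sum_nonneg (fun i (_ : i ∈ Finset.univ) =>
        mul_nonneg (hc i) (hψpos i).le)).lt_or_eq with h | h
    · exact h
    · exfalso
      apply hx0
      have hz := (Finset.sum_eq_zero_iff_of_nonneg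
        (fun i (_ : i ∈ Finset.univ) => mul_nonneg (hc i) (hψpos i).le)).1 h.symm
      have : ∀ i, c i = 0 := by
        intro i
        have := hz i (Finset.mem_univ i)
        exact (mul_eq_zero.1 this).resolve_right (ne_of_gt (hψpos i))
      simp [this]
  -- 0 is not in the interior of σ
  have h0int : (0 : Fin d → ℝ) ∉ interior σ := by
    intro h
    obtain ⟨ε, hε, hball⟩ := Metric.isOpen_iff.mp isOpen_interior 0 h
    set j : Fin d := ⟨0, hd⟩
    have hbj : b j ≠ 0 := b.ne_zero j
    have hbjn : 0 < ‖b j‖ := norm_pos_iff.mpr hbj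
    set w : Fin d → ℝ := (ε / (2 * ‖b j‖)) • b j with hw
    have hwn : ‖w‖ = ε / 2 := by
      rw [hw, norm_smul, Real.norm_eq_abs, abs_of_pos (by positivity)]
      field_simp
    have hw0 : w ≠ 0 := by
      intro h0
      rw [h0, norm_zero] at hwn
      linarith
    have hwσ : w ∈ σ := interior_subset (hball (by
      rw [Metric.mem_ball, dist_zero_right, hwn]; linarith))
    have hwσ' : -w ∈ σ := interior_subset (hball (by
      rw [Metric.mem_ball, dist_zero_right, norm_neg, hwn]; linarith))
    have h1 := hψσpos w hwσ hw0
    have h2 := hψσpos (-w) hwσ' (neg_ne_zero.mpr hw0)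
    rw [map_neg] at h2
    linarith
  -- the values of ψ on N
  have hval : ∀ v ∈ N, ∃ m : ℤ, ψ v = (m : ℝ) / n := by
    intro v hv
    have : ψ v ∈ {r : ℝ | ∃ x ∈ N, ψ x = r} := ⟨v, hv, rfl⟩
    rw [himg] at this
    exact this
  constructor
  · -- Part 1: unique decomposition
    intro v hv
    obtain ⟨m, hm⟩ := hval v hv
    have hxN : v - (m : ℝ) • e₀ ∈ N := hNsub v hv _ (hNzsmul m e₀ he₀)
    have hxψ : ψ (v - (m : ℝ) • e₀) = 0 := by
      rw [map_sub, _root_.map_smul, hm, hψe₀, smul_eq_mul]; ring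
    refine ⟨(v - (m : ℝ) • e₀, m), ⟨by rw [hΛ]; exact ⟨hxN, hxψ⟩, by simp⟩, ?_⟩
    rintro ⟨x, m'⟩ ⟨hxΛ, hveq⟩
    simp only at hveq
    rw [hΛ, mem_setOf_eq] at hxΛ
    have hψv : ψ v = (m' : ℝ) * (1 / n) := by
      rw [hveq, map_add, _root_.map_smul, hxΛ.2, hψe₀, smul_eq_mul, zero_add]
    have hm'm : m' = m := by
      rw [hm] at hψv
      field_simp at hψv
      exact_mod_cast hψv.symm
    subst hm'm
    have hx : x = v - (m' : ℝ) • e₀ := by rw [hveq]; abel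
    simp [hx]
  · -- Part 2
    obtain ⟨z0, hz0⟩ := hfull
    obtain ⟨ε0, hε0, hball0⟩ := Metric.isOpen_iff.mp isOpen_interior z0 hz0
    have hball0' : Metric.ball z0 ε0 ⊆ σ := hball0.trans interior_subset
    have hz0ne : z0 ≠ 0 := by rintro rfl; exact h0int hz0
    have hψz0 : 0 < ψ z0 := hψσpos z0 (interior_subset hz0) hz0ne
    -- description of the dilated slice
    have hQi : ∀ i : ℕ, 0 < (i : ℝ) →
        (i : ℝ) • Q = {x | ψ x = 0 ∧ x + (i : ℝ) • e₀ ∈ σ} := by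
      intro i hi
      ext x
      simp only [Set.mem_smul_set, mem_setOf_eq, hQ]
      constructor
      · rintro ⟨y, ⟨hy1, hy2⟩, rfl⟩
        refine ⟨by simp [_root_.map_smul, hy1], ?_⟩
        rw [← smul_add]
        exact hscale _ hi _ hy2
      · rintro ⟨h1, h2⟩
        refine ⟨(i : ℝ)⁻¹ • x, ⟨by simp [_root_.map_smul, h1], ?_⟩, ?_⟩
        · have : (i : ℝ)⁻¹ • x + e₀ = (i : ℝ)⁻¹ • (x + (i : ℝ) • e₀) := by
            rw [smul_add, smul_smul, inv_mul_cancel₀ (ne_of_gt hi), one_smul]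
          rw [this]
          exact hscale _ (inv_pos.mpr hi) _ h2
        · rw [smul_smul, mul_inv_cancel₀ (ne_of_gt hi), one_smul]
    -- key equivalence
    have hkey : ∀ i : ℕ, 1 ≤ i → ∀ x : Fin d → ℝ, ψ x = 0 →
        (x ∈ intrinsicInterior ℝ ((i : ℝ) • Q) ↔ x + (i : ℝ) • e₀ ∈ interior σ) := by
      intro i hi x hx
      have hi' : (0 : ℝ) < i := by exact_mod_cast hi
      have hw₀ : 0 < ψ ((i : ℝ) • e₀) := by
        rw [_root_.map_smul, smul_eq_mul, hψe₀]
        positivity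
      rw [hQi i hi']
      exact aux_key ψ σ hscale _ hw₀
        (aux_affineSpan ψ σ hscale z0 ε0 hε0 hball0' hψz0 _ hw₀) x hx
    -- builders in both directions
    have hbuild : ∀ v ∈ N, v ∈ interior σ → ∃ i : ℕ,
        (1 ≤ i ∧ ∃ x ∈ Λ, x ∈ intrinsicInterior ℝ ((i : ℝ) • Q)) ∧ ψ v = (i : ℝ) / n := by
      intro v hv hvint
      obtain ⟨m, hm⟩ := hval v hv
      have hvne : v ≠ 0 := by rintro rfl; exact h0int hvint
      have hψv : 0 < ψ v := hψσpos v (interior_subset hvint) hvne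
      have hm0 : 0 < m := by
        by_contra hcon
        push_neg at hcon
        have : (m : ℝ) ≤ 0 := by exact_mod_cast hcon
        have : ψ v ≤ 0 := by rw [hm]; exact div_nonpos_of_nonpos_of_nonneg this hn'.le
        linarith
      have hi1 : 1 ≤ m.toNat := by omega
      have hcast : ((m.toNat : ℕ) : ℝ) = (m : ℝ) := by
        exact_mod_cast Int.toNat_of_nonneg hm0.le
      have hxN : v - (m : ℝ) • e₀ ∈ N := hNsub v hv _ (hNzsmul m e₀ he₀)
      have hxψ : ψ (v - (m : ℝ) • e₀) = 0 := by
        rw [map_sub, _root_.map_smul, hm, hψe₀, smul_eq_mul]; ring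
      refine ⟨m.toNat, ⟨hi1, v - (m : ℝ) • e₀, by rw [hΛ]; exact ⟨hxN, hxψ⟩, ?_⟩, ?_⟩
      · rw [hkey m.toNat hi1 _ hxψ, hcast, sub_add_cancel]
        exact hvint
      · rw [hm, hcast]
    have hbuild2 : ∀ i : ℕ, 1 ≤ i → ∀ x ∈ Λ, x ∈ intrinsicInterior ℝ ((i : ℝ) • Q) →
        (x + (i : ℝ) • e₀ ∈ N ∧ x + (i : ℝ) • e₀ ∈ interior σ ∧
          ψ (x + (i : ℝ) • e₀) = (i : ℝ) / n) := by
      intro i hi x hxΛ hxint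
      rw [hΛ, mem_setOf_eq] at hxΛ
      have hcast : ((i : ℕ) : ℝ) = (((i : ℕ) : ℤ) : ℝ) := by push_cast; ring
      refine ⟨?_, (hkey i hi x hxΛ.2).mp hxint, ?_⟩
      · exact hNadd x hxΛ.1 _ (by rw [hcast]; exact hNzsmul _ e₀ he₀)
      · rw [map_add, _root_.map_smul, hxΛ.2, hψe₀, smul_eq_mul, zero_add]; ring
    -- nonempty target set
    set T : Set ℕ := {i : ℕ | 1 ≤ i ∧ ∃ x ∈ Λ, x ∈ intrinsicInterior ℝ ((i : ℝ) • Q)} with hT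
    have hTne : T.Nonempty := by
      obtain ⟨v, hv1, hv2⟩ := aux_lattice b σ hscale ⟨z0, hz0⟩
      obtain ⟨i, hiT, -⟩ := hbuild v ((hNmem v).2 hv1) hv2
      exact ⟨i, hiT⟩
    have hm₀ := Nat.sInf_mem hTne
    rw [hT, mem_setOf_eq] at hm₀
    obtain ⟨h1, x, hxΛ, hxint⟩ := hm₀
    obtain ⟨hvN, hvint, hvψ⟩ := hbuild2 _ h1 x hxΛ hxint
    have hleast : IsLeast {r : ℝ | ∃ v, v ∈ N ∧ v ∈ interior σ ∧ r = ψ v}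
        (((sInf T : ℕ) : ℝ) / n) := by
      constructor
      · exact ⟨x + ((sInf T : ℕ) : ℝ) • e₀, hvN, hvint, hvψ.symm⟩
      · rintro r ⟨v, hv, hvint', rfl⟩
        obtain ⟨i, hiT, hψv⟩ := hbuild v hv hvint'
        rw [hψv]
        have hle : sInf T ≤ i := Nat.sInf_le (by rw [hT, mem_setOf_eq]; exact hiT)
        have : ((sInf T : ℕ) : ℝ) ≤ (i : ℝ) := by exact_mod_cast hle
        gcongr
    rw [hleast.csInf_eq]
    ring
end

section
/- For d = 2 (so lattices of rank 1 in the slice): under the hypotheses of the main theorem with d = 2, one may take c_2 = 2; that is, if Λ ≅ ℤ, S = [a, b] ⊂ ℝ is an interval with endpoints in (1/q)ℤ containing exactly one point of ℤ in its interior, and j ≥ 1 is an integer such that the cone over {j} × S with vertex 0 contains no point of ℤ × ℤ in its interior, then j ≤ 2q. -/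
open Set

/-- Key integer lemma: if `j ≥ 2q+1` and `m < zq < n`, then there are integers
`0 < u < j` and `y` with `mu < yjq < nu`. -/
lemma dim_two_key (q j z m n : ℤ) (hq : 1 ≤ q) (hj : 2*q+1 ≤ j)
    (hm : m < z*q) (hn : z*q < n) :
    ∃ u y : ℤ, 0 < u ∧ u < j ∧ m*u < y*j*q ∧ y*j*q < n*u := by
  have hj0 : 0 < j := by linarith
  by_cases hg : Int.gcd z j = 1
  · -- coprime case: Bezout
    have hbez := Int.gcd_eq_gcd_ab z j
    set s := Int.gcdA z j with hs
    set t := Int.gcdB z j with ht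
    have h1 : z*s + j*t = 1 := by
      rw [hg] at hbez; push_cast at hbez; linarith
    set u₀ := s % j with hu0
    have h0le : 0 ≤ u₀ := Int.emod_nonneg s (ne_of_gt hj0)
    have hlt : u₀ < j := Int.emod_lt_of_pos s hj0
    have e : u₀ = s - j*(s/j) := by
      have := Int.mul_ediv_add_emod s j; linarith
    have hdvd : z*u₀ - 1 = j * (-(z*(s/j)) - t) := by
      rw [e]; linear_combination h1
    have hu0ne : u₀ ≠ 0 := by
      intro h
      rw [h] at hdvd
      have : j ∣ (1:ℤ) := ⟨-(-(z*(s/j)) - t), by linarith⟩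
      have := Int.le_of_dvd one_pos this
      linarith
    have h1le : 1 ≤ u₀ := lt_of_le_of_ne h0le (Ne.symm hu0ne)
    by_cases hcase : q + 1 ≤ u₀
    · refine ⟨u₀, -(z*(s/j)) - t, by linarith, hlt, ?_, ?_⟩
      · nlinarith [hdvd, hcase, hm, hq]
      · nlinarith [hdvd, hcase, hm, hn, hq]
    · push_neg at hcase
      set v := j - u₀ with hv
      have hv1 : q + 1 ≤ v := by omega
      have hvlt : v < j := by omega
      have hdvd2 : z*v + 1 = j * (z - (-(z*(s/j)) - t)) := by
        rw [hv]; linear_combination -hdvd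
      refine ⟨v, z - (-(z*(s/j)) - t), by linarith, hvlt, ?_, ?_⟩
      · nlinarith [hdvd2, hv1, hm, hq]
      · nlinarith [hdvd2, hv1, hn, hq]
  · -- non-coprime case
    have hgne : Int.gcd z j ≠ 0 := by
      intro h
      have := (Int.gcd_eq_zero_iff.mp h).2
      omega
    have hg2 : 2 ≤ (Int.gcd z j : ℤ) := by
      have : 2 ≤ Int.gcd z j := by omega
      exact_mod_cast this
    obtain ⟨u, hu⟩ := Int.gcd_dvd_right (a := z) (b := j)
    obtain ⟨y, hyz⟩ := Int.gcd_dvd_left (a := z) (b := j)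
    have hupos : 0 < u := by nlinarith
    have hult : u < j := by nlinarith
    refine ⟨u, y, hupos, hult, ?_, ?_⟩
    · have e : y*j*q = (z*q)*u := by linear_combination y*q*hu - q*u*hyz
      rw [e]
      exact mul_lt_mul_of_pos_right hm hupos
    · have e : y*j*q = (z*q)*u := by linear_combination y*q*hu - q*u*hyz
      rw [e]
      exact mul_lt_mul_of_pos_right hn hupos

/-- **the case `d = 2`, `c₂ = 2`.** If `S = [a, bb] ⊂ ℝ` has endpoints in
`(1/q)ℤ` and contains exactly one integer in its interior, and `j ≥ 1` is an integer such
that the cone over `{j} × S` with vertex `0` contains no point of `ℤ × ℤ` in its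
interior, then `j ≤ 2q`. -/
theorem dimension_two_bound
    (q : ℕ) (hq : 1 ≤ q)
    (a bb : ℝ) (hab : a < bb)
    (ha : ∃ m : ℤ, a = (m : ℝ) / q) (hb : ∃ m : ℤ, bb = (m : ℝ) / q)
    (z : ℤ) (hz : {x : ℝ | ∃ m : ℤ, x = (m : ℝ)} ∩ Set.Ioo a bb = {(z : ℝ)})
    (j : ℕ) (hj : 1 ≤ j)
    (C : Set (ℝ × ℝ))
    (hC : C = {p | ∃ t ∈ Set.Icc (0:ℝ) 1, ∃ x ∈ Set.Icc a bb,
      p = t • (((j : ℝ), x) : ℝ × ℝ)})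
    (hlat : interior C ∩
      {p : ℝ × ℝ | (∃ m : ℤ, p.1 = (m : ℝ)) ∧ ∃ m : ℤ, p.2 = (m : ℝ)} = ∅) :
    j ≤ 2 * q := by
  by_contra hcon
  push_neg at hcon
  obtain ⟨m, ham⟩ := ha
  obtain ⟨n, hbn⟩ := hb
  have hq0 : (0:ℝ) < q := by exact_mod_cast hq
  have hj0' : (0:ℝ) < j := by exact_mod_cast hj
  have hzmem : (z:ℝ) ∈ ({x : ℝ | ∃ m : ℤ, x = (m : ℝ)} ∩ Set.Ioo a bb) := by
    rw [hz]; exact rfl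
  have hz1 : a < (z:ℝ) := hzmem.2.1
  have hz2 : (z:ℝ) < bb := hzmem.2.2
  have hm : m < z * q := by
    have : (m:ℝ) < z * q := by
      rw [ham] at hz1
      rw [div_lt_iff₀ hq0] at hz1
      exact hz1
    exact_mod_cast this
  have hn : z * q < n := by
    have : (z:ℝ) * q < n := by
      rw [hbn] at hz2
      rw [lt_div_iff₀ hq0] at hz2
      exact hz2
    exact_mod_cast this
  have hjz : 2*(q:ℤ)+1 ≤ (j:ℤ) := by exact_mod_cast (by omega : 2*q+1 ≤ j)
  obtain ⟨u, y, hu0, huj, hl, hr⟩ :=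
    dim_two_key (q:ℤ) (j:ℤ) z m n (by exact_mod_cast hq) hjz hm hn
  set p : ℝ × ℝ := ((u:ℝ), (y:ℝ)) with hp
  set U : Set (ℝ × ℝ) :=
    {p : ℝ × ℝ | 0 < p.1} ∩ ({p | p.1 < (j:ℝ)} ∩
      ({p | a * p.1 < (j:ℝ) * p.2} ∩ {p | (j:ℝ) * p.2 < bb * p.1})) with hU
  have hUopen : IsOpen U := by
    refine (isOpen_lt continuous_const continuous_fst).inter
      ((isOpen_lt continuous_fst continuous_const).inter
        ((isOpen_lt (continuous_const.mul continuous_fst)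
            (continuous_const.mul continuous_snd)).inter
          (isOpen_lt (continuous_const.mul continuous_snd)
            (continuous_const.mul continuous_fst))))
  have hUC : U ⊆ C := by
    rintro ⟨x1, x2⟩ ⟨h1, h2, h3, h4⟩
    simp only [mem_setOf_eq] at h1 h2 h3 h4
    rw [hC]
    refine ⟨x1 / j, ⟨by positivity, (div_le_one hj0').mpr h2.le⟩,
      (j * x2) / x1, ⟨(le_div_iff₀ h1).mpr h3.le, (div_le_iff₀ h1).mpr h4.le⟩, ?_⟩
    have hx1 : x1 ≠ 0 := ne_of_gt h1
    have hjne : (j:ℝ) ≠ 0 := ne_of_gt hj0'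
    simp only [Prod.smul_mk, smul_eq_mul, Prod.mk.injEq]
    constructor
    · field_simp
    · field_simp
  have hpU : p ∈ U := by
    have hcl : (m:ℝ)*u < (y:ℝ)*(j:ℝ)*q := by exact_mod_cast hl
    have hcr : (y:ℝ)*(j:ℝ)*q < (n:ℝ)*u := by exact_mod_cast hr
    refine ⟨?_, ?_, ?_, ?_⟩
    · show (0:ℝ) < u
      exact_mod_cast hu0
    · show (u:ℝ) < j
      exact_mod_cast huj
    · show a * u < (j:ℝ) * (y:ℝ)
      rw [ham, div_mul_eq_mul_div, div_lt_iff₀ hq0]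
      linarith
    · show (j:ℝ) * (y:ℝ) < bb * u
      rw [hbn, div_mul_eq_mul_div, lt_div_iff₀ hq0]
      linarith
  have hmem : p ∈ interior C ∩
      {p : ℝ × ℝ | (∃ m : ℤ, p.1 = (m : ℝ)) ∧ ∃ m : ℤ, p.2 = (m : ℝ)} :=
    ⟨interior_maximal hUC hUopen hpU, ⟨u, rfl⟩, ⟨y, rfl⟩⟩
  rw [hlat] at hmem
  exact hmem
end
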